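/- arXiv:2501.09941 — 3 statements merged into one kernel-verified Lean document; each statement's English description precedes it below -/
import Mathlib

section
/- Every subset of Z/7Z of cardinality 4 is affine equivalent to either {0,1,2,3} or {0,1,2,4}. -/
set_option maxRecDepth 10000 in
theorem stmt7 (S : Finset (ZMod 7)) (h : S.card = 4) :
    (∃ s : (ZMod 7)ˣ, ∃ t : ZMod 7,
      S.image (fun a => (s : ZMod 7) * a + t) = ({0, 1, 2, 3} : Finset (ZMod 7))) ∨
    (∃ s : (ZMod 7)ˣ, ∃ t : ZMod 7,
      S.image (fun a => (s : ZMod 7) * a + t) = ({0, 1, 2, 4} : Finset (ZMod 7))) := by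
  revert h; revert S; decide
end

section
/- For every subset S of Z/7Z with at most 3 elements, the R-palette graph G_S contains no connected R-subgraph with at least three vertices. -/
/-- Adjacency in the R-palette graph `G_S` of a subset `S ⊆ ZMod p`. -/
def RAdj (p : ℕ) (S : Set (ZMod p)) (b₁ b₂ : ZMod p) : Prop :=
  b₁ ≠ b₂ ∧ ∃ a₁ ∈ S, ∃ a₂ ∈ S, ∃ a₃ ∈ S, ∃ a₄ ∈ S,
    a₁ + a₂ = b₁ ∧ a₃ + a₄ = b₂ ∧ (a₁ + a₃ = a₂ + a₄ ∨ a₁ + a₄ = a₂ + a₃)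

/-- `(V, E)` is a connected R-subgraph of the R-palette graph `G_S`:
vertices are sums of two elements of `S`, edges are edges of `G_S` between
vertices of `V` whose label `2⁻¹(b₁+b₂)` is again a vertex of `V`, and any two
vertices of `V` are joined by a path of edges of `E`. -/
def IsConnectedRSubgraph (p : ℕ) (S : Set (ZMod p)) (V : Set (ZMod p))
    (E : ZMod p → ZMod p → Prop) : Prop :=
  (∀ b ∈ V, ∃ a ∈ S, ∃ a' ∈ S, a + a' = b) ∧
  (∀ b₁ b₂, E b₁ b₂ → E b₂ b₁) ∧
  (∀ b₁ b₂, E b₁ b₂ →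
    b₁ ∈ V ∧ b₂ ∈ V ∧ RAdj p S b₁ b₂ ∧ (2 : ZMod p)⁻¹ * (b₁ + b₂) ∈ V) ∧
  (∀ b ∈ V, ∀ b' ∈ V, Relation.ReflTransGen E b b')


def elems7 : List (ZMod 7) := [0,1,2,3,4,5,6]

def memB (t1 t2 t3 t4 t5 t6 : Bool) (L1 L2 L3 L4 L5 L6 x : ZMod 7) : Bool :=
  (t1 && x == L1) || (t2 && x == L2) || (t3 && x == L3) ||
  (t4 && x == L4) || (t5 && x == L5) || (t6 && x == L6)

def adjB (a b c : ZMod 7) (t1 t2 t3 t4 t5 t6 : Bool) (x y : ZMod 7) : Bool :=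
  x != y && memB t1 t2 t3 t4 t5 t6 (a+a) (b+b) (c+c) (a+b) (a+c) (b+c) (4*(x+y)) &&
  ([a,b,c].any fun p => [a,b,c].any fun q => p + q == x &&
    ([a,b,c].any fun r => [a,b,c].any fun s => r + s == y &&
      (p + r == q + s || p + s == q + r)))

def okB (a b c : ZMod 7) (t1 t2 t3 t4 t5 t6 : Bool) : Bool :=
  !(elems7.any fun x => memB t1 t2 t3 t4 t5 t6 (a+a) (b+b) (c+c) (a+b) (a+c) (b+c) x &&
    (elems7.any fun y => memB t1 t2 t3 t4 t5 t6 (a+a) (b+b) (c+c) (a+b) (a+c) (b+c) y && x != y &&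
      (elems7.any fun z => memB t1 t2 t3 t4 t5 t6 (a+a) (b+b) (c+c) (a+b) (a+c) (b+c) z && x != z && y != z))) ||
  ([false, true].any fun u1 => [false, true].any fun u2 => [false, true].any fun u3 =>
   [false, true].any fun u4 => [false, true].any fun u5 => [false, true].any fun u6 =>
    (elems7.any fun x => memB u1 u2 u3 u4 u5 u6 (a+a) (b+b) (c+c) (a+b) (a+c) (b+c) x &&
      memB t1 t2 t3 t4 t5 t6 (a+a) (b+b) (c+c) (a+b) (a+c) (b+c) x) &&
    (elems7.any fun y => memB t1 t2 t3 t4 t5 t6 (a+a) (b+b) (c+c) (a+b) (a+c) (b+c) y &&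
      !memB u1 u2 u3 u4 u5 u6 (a+a) (b+b) (c+c) (a+b) (a+c) (b+c) y) &&
    (elems7.all fun x => !memB u1 u2 u3 u4 u5 u6 (a+a) (b+b) (c+c) (a+b) (a+c) (b+c) x ||
      (elems7.all fun y => !memB t1 t2 t3 t4 t5 t6 (a+a) (b+b) (c+c) (a+b) (a+c) (b+c) y ||
        !adjB a b c t1 t2 t3 t4 t5 t6 x y ||
        memB u1 u2 u3 u4 u5 u6 (a+a) (b+b) (c+c) (a+b) (a+c) (b+c) y)))

def check0 : Bool :=
  elems7.all fun b => elems7.all fun c =>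
  [false, true].all fun t1 => [false, true].all fun t2 => [false, true].all fun t3 =>
  [false, true].all fun t4 => [false, true].all fun t5 => [false, true].all fun t6 =>
    okB 0 b c t1 t2 t3 t4 t5 t6

set_option maxRecDepth 1000000 in
lemma check0_eq : check0 = true := by decide +kernel

lemma mem_elems7 : ∀ x : ZMod 7, x ∈ elems7 := by decide

lemma mem_bools : ∀ t : Bool, t ∈ [false, true] := by decide

lemma okB_true (b c : ZMod 7) (t1 t2 t3 t4 t5 t6 : Bool) :
    okB 0 b c t1 t2 t3 t4 t5 t6 = true := by
  have h := check0_eq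
  rw [check0] at h
  simp only [List.all_eq_true] at h
  exact h b (mem_elems7 b) c (mem_elems7 c) t1 (mem_bools t1) t2 (mem_bools t2) t3 (mem_bools t3)
    t4 (mem_bools t4) t5 (mem_bools t5) t6 (mem_bools t6)

lemma memB_true_iff (t1 t2 t3 t4 t5 t6 : Bool) (L1 L2 L3 L4 L5 L6 x : ZMod 7) :
    memB t1 t2 t3 t4 t5 t6 L1 L2 L3 L4 L5 L6 x = true ↔
    (t1 = true ∧ x = L1) ∨ (t2 = true ∧ x = L2) ∨ (t3 = true ∧ x = L3) ∨
    (t4 = true ∧ x = L4) ∨ (t5 = true ∧ x = L5) ∨ (t6 = true ∧ x = L6) := by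
  simp [memB, or_assoc]

lemma adjB_intro (a b c : ZMod 7) (t1 t2 t3 t4 t5 t6 : Bool) (x y p q r s : ZMod 7)
    (hp : p = a ∨ p = b ∨ p = c) (hq : q = a ∨ q = b ∨ q = c)
    (hr : r = a ∨ r = b ∨ r = c) (hs : s = a ∨ s = b ∨ s = c)
    (h1 : p + q = x) (h2 : r + s = y) (h3 : p + r = q + s ∨ p + s = q + r)
    (hne : x ≠ y)
    (hlab : memB t1 t2 t3 t4 t5 t6 (a+a) (b+b) (c+c) (a+b) (a+c) (b+c) (4*(x+y)) = true) :
    adjB a b c t1 t2 t3 t4 t5 t6 x y = true := by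
  simp only [adjB, Bool.and_eq_true, bne_iff_ne, ne_eq, List.any_eq_true, List.mem_cons,
    List.not_mem_nil, or_false, List.mem_singleton, beq_iff_eq, Bool.or_eq_true]
  exact ⟨⟨hne, hlab⟩, p, hp, q, hq, h1, r, hr, s, hs, h2, h3⟩

lemma okB_spec (b c : ZMod 7) (t1 t2 t3 t4 t5 t6 : Bool) (x y z : ZMod 7)
    (hx : memB t1 t2 t3 t4 t5 t6 (0+0) (b+b) (c+c) (0+b) (0+c) (b+c) x = true)
    (hy : memB t1 t2 t3 t4 t5 t6 (0+0) (b+b) (c+c) (0+b) (0+c) (b+c) y = true)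
    (hz : memB t1 t2 t3 t4 t5 t6 (0+0) (b+b) (c+c) (0+b) (0+c) (b+c) z = true)
    (hxy : x ≠ y) (hxz : x ≠ z) (hyz : y ≠ z) :
    ∃ u1 u2 u3 u4 u5 u6 : Bool,
      (∃ w, memB u1 u2 u3 u4 u5 u6 (0+0) (b+b) (c+c) (0+b) (0+c) (b+c) w = true ∧
            memB t1 t2 t3 t4 t5 t6 (0+0) (b+b) (c+c) (0+b) (0+c) (b+c) w = true) ∧
      (∃ w, memB t1 t2 t3 t4 t5 t6 (0+0) (b+b) (c+c) (0+b) (0+c) (b+c) w = true ∧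
            memB u1 u2 u3 u4 u5 u6 (0+0) (b+b) (c+c) (0+b) (0+c) (b+c) w = false) ∧
      (∀ v w, memB u1 u2 u3 u4 u5 u6 (0+0) (b+b) (c+c) (0+b) (0+c) (b+c) v = true →
         memB t1 t2 t3 t4 t5 t6 (0+0) (b+b) (c+c) (0+b) (0+c) (b+c) w = true →
         adjB 0 b c t1 t2 t3 t4 t5 t6 v w = true →
         memB u1 u2 u3 u4 u5 u6 (0+0) (b+b) (c+c) (0+b) (0+c) (b+c) w = true) := by
  have h := okB_true b c t1 t2 t3 t4 t5 t6
  rw [okB] at h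
  have hA : (elems7.any fun x => memB t1 t2 t3 t4 t5 t6 (0+0) (b+b) (c+c) (0+b) (0+c) (b+c) x &&
    (elems7.any fun y => memB t1 t2 t3 t4 t5 t6 (0+0) (b+b) (c+c) (0+b) (0+c) (b+c) y && x != y &&
      (elems7.any fun z => memB t1 t2 t3 t4 t5 t6 (0+0) (b+b) (c+c) (0+b) (0+c) (b+c) z && x != z && y != z))) = true := by
    simp only [List.any_eq_true, Bool.and_eq_true, bne_iff_ne, ne_eq]
    exact ⟨x, mem_elems7 x, hx, y, mem_elems7 y, ⟨hy, hxy⟩, z, mem_elems7 z, ⟨hz, hxz⟩, hyz⟩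
  rw [hA] at h
  simp only [Bool.not_true, Bool.false_or] at h
  simp only [List.any_eq_true, Bool.and_eq_true, List.all_eq_true, Bool.or_eq_true,
    Bool.not_eq_true', Bool.not_eq_true] at h
  obtain ⟨u1, -, u2, -, u3, -, u4, -, u5, -, u6, -, ⟨⟨w1, -, hw1⟩, ⟨w2, -, hw2⟩⟩, hcl⟩ := h
  refine ⟨u1, u2, u3, u4, u5, u6, ⟨w1, hw1⟩, ⟨w2, hw2⟩, fun v w hv hw hadj => ?_⟩
  rcases hcl v (mem_elems7 v) with h' | h'
  · rw [hv] at h'; cases h'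
  rcases h' w (mem_elems7 w) with (h' | h') | h'
  · rw [hw] at h'; cases h'
  · rw [hadj] at h'; cases h'
  · exact h'

lemma subset_triple (S : Set (ZMod 7)) (h : S.ncard ≤ 3) (a0 : ZMod 7) (h0 : a0 ∈ S) :
    ∃ b c, S ⊆ {a0, b, c} := by
  have hfin : S.Finite := Set.toFinite S
  have : S.ncard = 0 ∨ S.ncard = 1 ∨ S.ncard = 2 ∨ S.ncard = 3 := by omega
  rcases this with h' | h' | h' | h'
  · exact ⟨a0, a0, by rw [(Set.ncard_eq_zero hfin).mp h']; exact Set.empty_subset _⟩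
  · obtain ⟨x, hx⟩ := Set.ncard_eq_one.mp h'
    exact ⟨x, x, by rw [hx]; intro z hz; right; left; exact hz⟩
  · obtain ⟨x, y, -, hxy⟩ := Set.ncard_eq_two.mp h'
    exact ⟨x, y, by rw [hxy]; exact Set.subset_insert _ _⟩
  · obtain ⟨x, y, z, hxy, hxz, hyz, hS⟩ := Set.ncard_eq_three.mp h'
    rw [hS] at h0 ⊢
    rcases h0 with rfl | rfl | h0
    · exact ⟨y, z, subset_rfl⟩
    · refine ⟨x, z, fun w hw => ?_⟩
      rcases hw with rfl | rfl | rfl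
      · right; left; rfl
      · left; rfl
      · right; right; exact rfl
    · rw [Set.mem_singleton_iff] at h0; subst h0
      refine ⟨x, y, fun w hw => ?_⟩
      rcases hw with rfl | rfl | rfl
      · right; left; rfl
      · right; right; exact rfl
      · left; rfl

theorem stmt14 (S : Set (ZMod 7)) (hS : S.ncard ≤ 3) :
    ¬ ∃ (V : Set (ZMod 7)) (E : ZMod 7 → ZMod 7 → Prop),
      IsConnectedRSubgraph 7 S V E ∧ 3 ≤ V.ncard := by
  classical
  rintro ⟨V, E, ⟨hV, _hsym, hE, hconn⟩, hcard⟩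
  -- pick a base point of S
  have hVne : V.Nonempty := Set.nonempty_of_ncard_ne_zero (by omega)
  obtain ⟨v0, hv0⟩ := hVne
  obtain ⟨a0, ha0, -⟩ := hV v0 hv0
  -- shift
  set s : ZMod 7 := a0 with hs
  have hinj : Function.Injective (fun x : ZMod 7 => x - s) := fun x y h => by simpa using h
  have hinj2 : Function.Injective (fun x : ZMod 7 => x - 2*s) := fun x y h => by simpa using h
  set S' : Set (ZMod 7) := (fun x => x - s) '' S with hS'
  set V' : Set (ZMod 7) := (fun x => x - 2*s) '' V with hV'
  have h0S' : (0 : ZMod 7) ∈ S' := ⟨a0, ha0, by rw [hs]; ring⟩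
  have hS'card : S'.ncard ≤ 3 := by rw [Set.ncard_image_of_injective _ hinj]; exact hS
  obtain ⟨b, c, hsub⟩ := subset_triple S' hS'card 0 h0S'
  -- boolean vertex data
  set t1 : Bool := decide ((0+0 : ZMod 7) ∈ V') with ht1
  set t2 : Bool := decide ((b+b : ZMod 7) ∈ V') with ht2
  set t3 : Bool := decide ((c+c : ZMod 7) ∈ V') with ht3
  set t4 : Bool := decide ((0+b : ZMod 7) ∈ V') with ht4
  set t5 : Bool := decide ((0+c : ZMod 7) ∈ V') with ht5
  set t6 : Bool := decide ((b+c : ZMod 7) ∈ V') with ht6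
  have hmemV' : ∀ x, x ∈ V' ↔
      memB t1 t2 t3 t4 t5 t6 (0+0) (b+b) (c+c) (0+b) (0+c) (b+c) x = true := by
    intro x
    rw [memB_true_iff]
    constructor
    · rintro hx
      obtain ⟨v, hv, hvx⟩ := hx
      obtain ⟨p0, hp0, q0, hq0, hpq0⟩ := hV v hv
      have hp : p0 - s ∈ S' := ⟨p0, hp0, rfl⟩
      have hq : q0 - s ∈ S' := ⟨q0, hq0, rfl⟩
      have hsum : (p0 - s) + (q0 - s) = x := by rw [← hvx, ← hpq0]; ring
      have hp' := hsub hp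
      have hq' := hsub hq
      simp only [Set.mem_insert_iff, Set.mem_singleton_iff] at hp' hq'
      have hxV' : x ∈ V' := ⟨v, hv, hvx⟩
      rcases hp' with hp' | hp' | hp' <;> rcases hq' with hq' | hq' | hq' <;>
        rw [hp', hq'] at hsum
      · exact Or.inl ⟨decide_eq_true (hsum ▸ hxV'), hsum.symm⟩
      · exact Or.inr (Or.inr (Or.inr (Or.inl ⟨decide_eq_true (hsum ▸ hxV'), hsum.symm⟩)))
      · exact Or.inr (Or.inr (Or.inr (Or.inr (Or.inl ⟨decide_eq_true (hsum ▸ hxV'), hsum.symm⟩))))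
      · have hsum' : (0:ZMod 7) + b = x := by rw [← hsum]; ring
        exact Or.inr (Or.inr (Or.inr (Or.inl ⟨decide_eq_true (hsum' ▸ hxV'), hsum'.symm⟩)))
      · exact Or.inr (Or.inl ⟨decide_eq_true (hsum ▸ hxV'), hsum.symm⟩)
      · exact Or.inr (Or.inr (Or.inr (Or.inr (Or.inr ⟨decide_eq_true (hsum ▸ hxV'), hsum.symm⟩))))
      · have hsum' : (0:ZMod 7) + c = x := by rw [← hsum]; ring
        exact Or.inr (Or.inr (Or.inr (Or.inr (Or.inl ⟨decide_eq_true (hsum' ▸ hxV'), hsum'.symm⟩))))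
      · have hsum' : b + c = x := by rw [← hsum]; ring
        exact Or.inr (Or.inr (Or.inr (Or.inr (Or.inr ⟨decide_eq_true (hsum' ▸ hxV'), hsum'.symm⟩))))
      · exact Or.inr (Or.inr (Or.inl ⟨decide_eq_true (hsum ▸ hxV'), hsum.symm⟩))
    · rintro (⟨ht, rfl⟩ | ⟨ht, rfl⟩ | ⟨ht, rfl⟩ | ⟨ht, rfl⟩ | ⟨ht, rfl⟩ | ⟨ht, rfl⟩) <;>
        exact of_decide_eq_true ht
  -- three distinct vertices of V'
  have h3 : 3 ≤ V'.ncard := by rw [Set.ncard_image_of_injective _ hinj2]; exact hcard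
  obtain ⟨T, hTsub, hT3⟩ := Set.exists_subset_card_eq h3
  obtain ⟨x, y, z, hxy, hxz, hyz, rfl⟩ := Set.ncard_eq_three.mp hT3
  obtain ⟨u1, u2, u3, u4, u5, u6, ⟨w1, hw1u, hw1t⟩, ⟨w2, hw2t, hw2u⟩, hcl⟩ :=
    okB_spec b c t1 t2 t3 t4 t5 t6 x y z
      ((hmemV' x).mp (hTsub (by simp))) ((hmemV' y).mp (hTsub (by simp)))
      ((hmemV' z).mp (hTsub (by simp))) hxy hxz hyz
  -- path from w1 to w2 in original coordinates
  have hw1V : w1 ∈ V' := (hmemV' w1).mpr hw1t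
  have hw2V : w2 ∈ V' := (hmemV' w2).mpr hw2t
  obtain ⟨v1, hv1, hv1'⟩ := hw1V
  obtain ⟨v2, hv2, hv2'⟩ := hw2V
  have hv1'' : v1 - 2*s = w1 := hv1'
  have hv2'' : v2 - 2*s = w2 := hv2'
  have hinv : (2 : ZMod 7)⁻¹ = 4 := ZMod.inv_eq_of_mul_eq_one 7 2 4 (by decide)
  have h7 : (7 : ZMod 7) = 0 := by decide
  have hWall : ∀ w, Relation.ReflTransGen E v1 w →
      memB u1 u2 u3 u4 u5 u6 (0+0) (b+b) (c+c) (0+b) (0+c) (b+c) (w - 2*s) = true := by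
    intro w hw
    induction hw with
    | refl => rw [hv1'']; exact hw1u
    | @tail m n hsteps hmn ih =>
      obtain ⟨hmV, hnV, ⟨hne, a₁, ha₁, a₂, ha₂, a₃, ha₃, a₄, ha₄, e1, e2, e3⟩, hlab⟩ := hE m n hmn
      refine hcl (m - 2*s) (n - 2*s) ih ((hmemV' _).mp ⟨n, hnV, rfl⟩) ?_
      have hmem : ∀ w ∈ S, w - s = 0 ∨ w - s = b ∨ w - s = c := by
        intro w hw
        have := hsub ⟨w, hw, rfl⟩
        simpa only [Set.mem_insert_iff, Set.mem_singleton_iff] using this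
      refine adjB_intro 0 b c t1 t2 t3 t4 t5 t6 (m - 2*s) (n - 2*s)
        (a₁ - s) (a₂ - s) (a₃ - s) (a₄ - s)
        (hmem _ ha₁) (hmem _ ha₂) (hmem _ ha₃) (hmem _ ha₄)
        (by rw [← e1]; ring) (by rw [← e2]; ring)
        (by rcases e3 with e3 | e3
            · exact Or.inl (by linear_combination e3)
            · exact Or.inr (by linear_combination e3))
        (fun h => hne (by have := congrArg (fun w => w + 2*s) h; simpa using this)) ?_
      have h4 : (4 : ZMod 7) * ((m - 2*s) + (n - 2*s)) = (4*(m+n)) - 2*s := by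
        linear_combination (-(2*s)) * h7
      rw [h4]
      refine (hmemV' _).mp ⟨4*(m+n), ?_, rfl⟩
      rwa [hinv] at hlab
  have hWend := hWall v2 (hconn v1 hv1 v2 hv2)
  rw [hv2''] at hWend
  rw [hWend] at hw2u
  cases hw2u
end

section
/- Let k ≥ 1 and let M = (w₁, …, w_k) be a k×k integer matrix (columns wⱼ) satisfying the row condition (⋆) that every row's multiset of nonzero entries is one of {-2},{-1},{1},{2},{-2,1},{-2,2},{-1,-1},{-1,1},{-1,2},{1,1},{-2,1,1},{-1,-1,1},{-1,-1,2},{-1,1,1},{-1,-1,1,1}. Then the matrix obtained from M by replacing the j-th column wⱼ with -(w₁ + ⋯ + w_k) also satisfies condition (⋆). -/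
def myL : List (Multiset ℤ) :=
  [{-2}, {-1}, {1}, {2}, {-2, 1}, {-2, 2}, {-1, -1}, {-1, 1}, {-1, 2}, {1, 1},
   {-2, 1, 1}, {-1, -1, 1}, {-1, -1, 2}, {-1, 1, 1}, {-1, -1, 1, 1}]

lemma myKey1 : ∀ A ∈ myL, (if -A.sum ≠ 0 then ({-A.sum} : Multiset ℤ) else 0) + A ∈ myL := by
  decide

lemma myKey2 : ∀ A ∈ myL, ∀ x ∈ A,
    (if -A.sum ≠ 0 then ({-A.sum} : Multiset ℤ) else 0) + A.erase x ∈ myL := by decide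

lemma mySumFilter (m : Multiset ℤ) : (m.filter (· ≠ 0)).sum = m.sum := by
  induction m using Multiset.induction_on with
  | empty => simp
  | cons a s ih =>
    rw [Multiset.filter_cons, Multiset.sum_cons, Multiset.sum_add, ih]
    by_cases ha : a = 0
    · simp [ha]
    · simp [ha]

/-- Condition (⋆): the multiset of nonzero entries of each row is one of the
fifteen listed multisets. -/
def StarCond (k : ℕ) (M : Matrix (Fin k) (Fin k) ℤ) : Prop :=
  ∀ i, Multiset.filter (· ≠ 0) (Finset.univ.val.map (M i)) ∈
    ([{-2}, {-1}, {1}, {2}, {-2, 1}, {-2, 2}, {-1, -1}, {-1, 1}, {-1, 2}, {1, 1},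
      {-2, 1, 1}, {-1, -1, 1}, {-1, -1, 2}, {-1, 1, 1}, {-1, -1, 1, 1}] : List (Multiset ℤ))

theorem stmt17 (k : ℕ) (hk : 1 ≤ k) (M : Matrix (Fin k) (Fin k) ℤ)
    (h : StarCond k M) (j : Fin k) :
    StarCond k (fun i j' => if j' = j then -(∑ l, M i l) else M i j') := by
  intro i
  have hA := h i
  obtain ⟨r, hr⟩ : ∃ r, (Finset.univ.val : Multiset (Fin k)) = j ::ₘ r :=
    ⟨_, (Multiset.cons_erase (Finset.mem_val.mpr (Finset.mem_univ j))).symm⟩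
  have hrj : j ∉ r := by
    have hnd := Finset.univ.nodup (α := Fin k)
    rw [hr] at hnd
    exact (Multiset.nodup_cons.mp hnd).1
  have hmap : r.map (fun j' => if j' = j then -(∑ l, M i l) else M i j') = r.map (M i) :=
    Multiset.map_congr rfl (fun x hx => if_neg (fun hxj : x = j => hrj (hxj ▸ hx)))
  show Multiset.filter (· ≠ 0)
      (Finset.univ.val.map (fun j' => if j' = j then -(∑ l, M i l) else M i j')) ∈ myL
  rw [hr, Multiset.map_cons, if_pos rfl, hmap, Multiset.filter_cons]
  rw [hr, Multiset.map_cons, Multiset.filter_cons] at hA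
  set C := Multiset.filter (· ≠ 0) (Multiset.map (M i) r) with hC
  have hS : (∑ l, M i l) = M i j + C.sum := by
    rw [hC, mySumFilter, Finset.sum_eq_multiset_sum, hr, Multiset.map_cons, Multiset.sum_cons]
  by_cases hz : M i j = 0
  · rw [if_neg (not_not_intro hz), zero_add] at hA
    rw [hS, hz, zero_add]
    exact myKey1 C hA
  · rw [if_pos hz, Multiset.singleton_add] at hA
    have hkey := myKey2 (M i j ::ₘ C) hA (M i j) (Multiset.mem_cons_self _ _)
    rw [Multiset.sum_cons, Multiset.erase_cons_head] at hkey
    rwa [hS]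
end
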